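/- arXiv:2305.02891 — 2 statements merged into one kernel-verified Lean document; each statement's English description precedes it below -/
import Mathlib

section
/- In the metric measure space (ℝ, Euclidean distance, Lebesgue measure), let B = (0,1) ∪ (1,2) and A = (0,1). Then Per(A) + Per(B ∖ A) = 4 while Per(B) + 2·Per_B(A) = 2; in particular the inequality Per(A) + Per(B ∖ A) ≤ Per(B) + 2·Per_B(A) fails for this non-closed set B. -/
open MeasureTheory Metric Set Filter ENNReal NNReal Topology

variable {X : Type*} [PseudoMetricSpace X] [MeasurableSpace X]

/-- The asymptotic Lipschitz constant `lip_a f x = inf_{r>0} Lip(f|_{B_r(x)})`,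
computed in `ℝ≥0∞` via the optimal Lipschitz constant on each ball. -/
noncomputable def lipa (f : X → ℝ) (x : X) : ℝ≥0∞ :=
  ⨅ (r : ℝ) (_ : 0 < r), ⨆ (y : X) (_ : y ∈ ball x r) (z : X) (_ : z ∈ ball x r),
    edist (f y) (f z) / edist y z

/-- `f` is locally Lipschitz on the set `A`. -/
def LocLipOn (f : X → ℝ) (A : Set X) : Prop :=
  ∀ x ∈ A, ∃ r > 0, ball x r ⊆ A ∧ ∃ K : ℝ≥0, LipschitzOnWith K f (ball x r)

/-- `fn → f` in `L¹_loc(μ)`: convergence of the integrals of `|fn n - f|` on bounded sets. -/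
def TendstoL1loc (μ : Measure X) (fn : ℕ → X → ℝ) (f : X → ℝ) : Prop :=
  ∀ S : Set X, Bornology.IsBounded S →
    Tendsto (fun n => ∫⁻ x in S, ENNReal.ofReal |fn n x - f x| ∂μ) atTop (𝓝 0)

/-- Total variation `|Df|(A)` on an open set `A`. -/
noncomputable def totVarOpen (μ : Measure X) (f : X → ℝ) (A : Set X) : ℝ≥0∞ :=
  ⨅ (fn : ℕ → X → ℝ) (_ : ∀ n, LocLipOn (fn n) A) (_ : TendstoL1loc (μ.restrict A) fn f),
    atTop.liminf fun n => ∫⁻ x in A, lipa (fn n) x ∂μ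

/-- Total variation `|Df|(B)` of a Borel set `B`, by outer regularization over open sets. -/
noncomputable def totVar (μ : Measure X) (f : X → ℝ) (B : Set X) : ℝ≥0∞ :=
  ⨅ (A : Set X) (_ : IsOpen A) (_ : B ⊆ A), totVarOpen μ f A

/-- `Per(E; F) = |Dχ_E|_X(F)`. -/
noncomputable def perIn (μ : Measure X) (E F : Set X) : ℝ≥0∞ :=
  totVar μ (E.indicator 1) F

/-- `Per(E) = |Dχ_E|_X(X)`. -/
noncomputable def per (μ : Measure X) (E : Set X) : ℝ≥0∞ := perIn μ E univ

/-- `Per_B(E) = |Dχ_E|_B(B)`: the perimeter of `E` on `B`, computed in `(X, d, μ|_B)`. -/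
noncomputable def perOn (μ : Measure X) (B E : Set X) : ℝ≥0∞ :=
  totVar (μ.restrict B) (E.indicator 1) B

/-- `f ∈ BV(B)`: `f ∈ L¹(μ|_B)` and `|Df|_B(B) < ∞`. -/
def MemBV (μ : Measure X) (B : Set X) (f : X → ℝ) : Prop :=
  Integrable f (μ.restrict B) ∧ totVar (μ.restrict B) f B < ⊤

/-- `‖f‖_{BV(B)} = ‖f‖_{L¹(μ|_B)} + |Df|_B(B)`. -/
noncomputable def bvNorm (μ : Measure X) (B : Set X) (f : X → ℝ) : ℝ≥0∞ :=
  (∫⁻ x in B, ENNReal.ofReal |f x| ∂μ) + totVar (μ.restrict B) f B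

/-- `B` is a `BV`-extension set. -/
def IsBVExtensionSet (μ : Measure X) (B : Set X) : Prop :=
  ∃ C : ℝ, 0 < C ∧ ∀ f : X → ℝ, MemBV μ B f →
    ∃ g : X → ℝ, MemBV μ univ g ∧ EqOn g f B ∧
      bvNorm μ univ g ≤ ENNReal.ofReal C * bvNorm μ B f

/-- The functional `M_λ(A) = Per(A) + λ m(Ω \ A)`. -/
noncomputable def Mfun (μ : Measure X) (Ω : Set X) (lam : ℝ) (A : Set X) : ℝ≥0∞ :=
  per μ A + ENNReal.ofReal lam * μ (Ω \ A)
set_option linter.unusedSectionVars false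
set_option linter.unnecessarySeqFocus false
set_option maxHeartbeats 1000000


noncomputable def LrQ {X : Type*} [PseudoMetricSpace X] (f : X → ℝ) (r : ℝ) (x : X) : ℝ≥0∞ :=
  ⨆ (y : X) (_ : y ∈ ball x r) (z : X) (_ : z ∈ ball x r), edist (f y) (f z) / edist y z

lemma lipa_eq_iInf (f : X → ℝ) (x : X) : lipa f x = ⨅ (r : ℝ) (_ : 0 < r), LrQ f r x := rfl

lemma LrQ_mono (f : X → ℝ) {r r' : ℝ} (h : r ≤ r') (x : X) : LrQ f r x ≤ LrQ f r' x := by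
  refine iSup₂_le fun y hy => iSup₂_le fun z hz => ?_
  exact le_iSup₂_of_le y (ball_subset_ball h hy) (le_iSup₂_of_le z (ball_subset_ball h hz) le_rfl)

lemma lipa_le_LrQ (f : X → ℝ) {r : ℝ} (hr : 0 < r) (x : X) : lipa f x ≤ LrQ f r x :=
  iInf₂_le r hr

lemma LrQ_le_of_lipschitzOnWith {f : X → ℝ} {K : ℝ≥0} {r : ℝ} {x : X}
    (h : LipschitzOnWith K f (ball x r)) : LrQ f r x ≤ K := by
  refine iSup₂_le fun y hy => iSup₂_le fun z hz => ?_
  exact ENNReal.div_le_of_le_mul (h hy hz)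

lemma lipa_le_of_lipschitzOnWith {f : X → ℝ} {K : ℝ≥0} {r : ℝ} {x : X} (hr : 0 < r)
    (h : LipschitzOnWith K f (ball x r)) : lipa f x ≤ K :=
  (lipa_le_LrQ f hr x).trans (LrQ_le_of_lipschitzOnWith h)

lemma lipa_le_of_lipschitzWith {f : X → ℝ} {K : ℝ≥0} (h : LipschitzWith K f) (x : X) :
    lipa f x ≤ K :=
  lipa_le_of_lipschitzOnWith one_pos (h.lipschitzOnWith)

lemma lipa_eq_zero_of_const {f : X → ℝ} {r : ℝ} {x : X} (hr : 0 < r) (c : ℝ)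
    (h : ∀ y ∈ ball x r, f y = c) : lipa f x = 0 := by
  refine le_antisymm ?_ (zero_le)
  refine (lipa_le_LrQ f hr x).trans ?_
  refine iSup₂_le fun y hy => iSup₂_le fun z hz => ?_
  rw [h y hy, h z hz]
  simp

lemma lipa_neg (f : X → ℝ) (x : X) : lipa (fun y => - f y) x = lipa f x := by
  unfold lipa
  congr 1
  ext r
  congr 1
  ext
  congr 1
  ext y
  congr 1
  ext
  congr 1
  ext z
  congr 1
  ext
  rw [edist_neg_neg]


lemma LrQ_lowerSemicontinuous {X : Type*} [PseudoMetricSpace X] (f : X → ℝ) (r : ℝ) :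
    LowerSemicontinuous (LrQ f r) := by
  intro x c hc
  rw [show LrQ f r x = ⨆ (y : X) (_ : y ∈ ball x r) (z : X) (_ : z ∈ ball x r),
      edist (f y) (f z) / edist y z from rfl] at hc
  rw [gt_iff_lt, lt_iSup_iff] at hc
  obtain ⟨y, hc⟩ := hc
  rw [lt_iSup_iff] at hc
  obtain ⟨hy, hc⟩ := hc
  rw [lt_iSup_iff] at hc
  obtain ⟨z, hc⟩ := hc
  rw [lt_iSup_iff] at hc
  obtain ⟨hz, hc⟩ := hc
  have hδ : 0 < r - max (dist y x) (dist z x) := by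
    rw [mem_ball] at hy hz
    simp [sub_pos, lt_of_le_of_lt (le_max_left _ _) , hy, hz]
  filter_upwards [Metric.ball_mem_nhds x hδ] with x' hx'
  have hy' : y ∈ ball x' r := by
    rw [mem_ball] at *
    calc dist y x' ≤ dist y x + dist x x' := dist_triangle _ _ _
    _ < max (dist y x) (dist z x) + (r - max (dist y x) (dist z x)) := by
        have := dist_comm x x' ▸ hx'
        exact add_lt_add_of_le_of_lt (le_max_left _ _) this
    _ = r := by ring
  have hz' : z ∈ ball x' r := by
    rw [mem_ball] at *
    calc dist z x' ≤ dist z x + dist x x' := dist_triangle _ _ _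
    _ < max (dist y x) (dist z x) + (r - max (dist y x) (dist z x)) := by
        have := dist_comm x x' ▸ hx'
        exact add_lt_add_of_le_of_lt (le_max_right _ _) this
    _ = r := by ring
  exact lt_of_lt_of_le hc (le_iSup₂_of_le y hy' (le_iSup₂_of_le z hz' le_rfl))

lemma LrQ_measurable (f : ℝ → ℝ) (r : ℝ) : Measurable (LrQ f r) :=
  (LrQ_lowerSemicontinuous f r).measurable

lemma exists_lipschitzOnWith_Icc (f : ℝ → ℝ)
    (hf : ∀ x : ℝ, ∃ r > 0, ∃ K : ℝ≥0, LipschitzOnWith K f (ball x r)) (c d : ℝ) :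
    ∃ K : ℝ≥0, LipschitzOnWith K f (Icc c d) := by
  by_cases hcd : c ≤ d
  swap
  · exact ⟨0, by rw [Icc_eq_empty hcd]; exact lipschitzOnWith_empty _ _⟩
  set S : Set ℝ := {y : ℝ | y ∈ Icc c d ∧ ∃ K : ℝ≥0, LipschitzOnWith K f (Icc c y)} with hS
  have hcS : c ∈ S := by
    refine ⟨⟨le_rfl, hcd⟩, 0, ?_⟩
    rw [Icc_self]
    intro p hp q hq
    simp_all
  have hS_ne : S.Nonempty := ⟨c, hcS⟩
  have hS_bdd : BddAbove S := ⟨d, fun y hy => hy.1.2⟩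
  set y₀ := sSup S with hy₀def
  have hcy₀ : c ≤ y₀ := le_csSup hS_bdd hcS
  have hy₀d : y₀ ≤ d := csSup_le hS_ne fun y hy => hy.1.2
  obtain ⟨r, hr, K₀, hK₀⟩ := hf y₀
  obtain ⟨y, hyS, hy⟩ := exists_lt_of_lt_csSup hS_ne (show y₀ - r/2 < y₀ by linarith)
  have hyy₀ : y ≤ y₀ := le_csSup hS_bdd hyS
  obtain ⟨K₁, hK₁⟩ := hyS.2
  set w := min d (y₀ + r/4) with hwdef
  set K : ℝ≥0 := K₁ + K₀ with hKdef
  have hK₀' := lipschitzOnWith_iff_dist_le_mul.mp hK₀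
  have hK₁' := lipschitzOnWith_iff_dist_le_mul.mp hK₁
  have hy₀ball : ∀ u : ℝ, y₀ - r/2 ≤ u → u ≤ y₀ + r/4 → u ∈ ball y₀ r := by
    intro u h1 h2
    rw [mem_ball, Real.dist_eq, abs_lt]
    constructor <;> linarith
  have hwS : w ∈ S := by
    refine ⟨⟨le_min hcd (by linarith), min_le_left _ _⟩, K, ?_⟩
    have H : ∀ p ∈ Icc c w, ∀ q ∈ Icc c w, p ≤ q → dist (f p) (f q) ≤ K * dist p q := by
      intro p hp q hq hpq
      have hqw : q ≤ y₀ + r/4 := le_trans hq.2 (min_le_right _ _)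
      have hK1K : (K₁ : ℝ) ≤ K := by simp [hKdef]
      have hK0K : (K₀ : ℝ) ≤ K := by simp [hKdef]
      by_cases hqy : q ≤ y
      · calc dist (f p) (f q) ≤ K₁ * dist p q := hK₁' p ⟨hp.1, le_trans hpq hqy⟩ q ⟨hq.1, hqy⟩
        _ ≤ K * dist p q := by gcongr
      push_neg at hqy
      have hqball : q ∈ ball y₀ r := hy₀ball q (by linarith) hqw
      by_cases hpy : y₀ - r/2 ≤ p
      · calc dist (f p) (f q) ≤ K₀ * dist p q := hK₀' p (hy₀ball p hpy (by linarith)) q hqball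
        _ ≤ K * dist p q := by gcongr
      push_neg at hpy
      have hyball : y ∈ ball y₀ r := hy₀ball y (by linarith) (by linarith)
      have h1 : dist (f p) (f y) ≤ K₁ * dist p y := hK₁' p ⟨hp.1, by linarith⟩ y ⟨hyS.1.1, le_rfl⟩
      have h2 : dist (f y) (f q) ≤ K₀ * dist y q := hK₀' y hyball q hqball
      have e1 : dist p y = y - p := by rw [Real.dist_eq, abs_of_nonpos (by linarith)]; ring
      have e2 : dist y q = q - y := by rw [Real.dist_eq, abs_of_nonpos (by linarith)]; ring
      have e3 : dist p q = q - p := by rw [Real.dist_eq, abs_of_nonpos (by linarith)]; ring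
      calc dist (f p) (f q) ≤ dist (f p) (f y) + dist (f y) (f q) := dist_triangle _ _ _
      _ ≤ K₁ * dist p y + K₀ * dist y q := add_le_add h1 h2
      _ ≤ K * dist p q := by
          rw [e1, e2, e3]
          have b1 : (K₁ : ℝ) * (y - p) ≤ K * (y - p) := by gcongr <;> linarith
          have b2 : (K₀ : ℝ) * (q - y) ≤ K * (q - y) := by gcongr <;> linarith
          have : (K : ℝ) * (y - p) + K * (q - y) = K * (q - p) := by ring
          linarith
    rw [lipschitzOnWith_iff_dist_le_mul]
    intro p hp q hq
    rcases le_total p q with h | h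
    · exact H p hp q hq h
    · rw [dist_comm p q, dist_comm (f p) (f q)]; exact H q hq p hp h
  have hwy₀ : w ≤ y₀ := le_csSup hS_bdd hwS
  have hy₀d' : y₀ = d := by
    by_contra hne
    have : y₀ < d := lt_of_le_of_ne hy₀d hne
    have : y₀ < w := lt_min this (by linarith)
    linarith
  have : w = d := by rw [hwdef, hy₀d']; exact min_eq_left (by linarith)
  obtain ⟨_, K', hK'⟩ := hwS
  exact ⟨K', by rwa [this] at hK'⟩
lemma continuous_of_locLip {f : ℝ → ℝ}
    (hf : ∀ x : ℝ, ∃ r > 0, ∃ K : ℝ≥0, LipschitzOnWith K f (ball x r)) : Continuous f := by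
  rw [continuous_iff_continuousAt]
  intro x
  obtain ⟨r, hr, K, hK⟩ := hf x
  exact hK.continuousOn.continuousAt (Metric.ball_mem_nhds x hr)

lemma ofReal_quot_le_LrQ (f : ℝ → ℝ) {h r : ℝ} (hh : 0 < h) (hhr : h < r) (x : ℝ) :
    ENNReal.ofReal ((f (x + h) - f x) / h) ≤ LrQ f r x := by
  have h1 : ENNReal.ofReal ((f (x + h) - f x) / h) ≤
      ENNReal.ofReal (|f (x + h) - f x| / h) := by
    apply ENNReal.ofReal_le_ofReal
    gcongr
    exact le_abs_self _
  refine h1.trans ?_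
  have h2 : ENNReal.ofReal (|f (x + h) - f x| / h) = edist (f (x + h)) (f x) / edist (x + h) x := by
    rw [ENNReal.ofReal_div_of_pos hh, edist_dist, edist_dist, Real.dist_eq, Real.dist_eq]
    congr 2
    rw [show x + h - x = h by ring, abs_of_pos hh]
  rw [h2]
  have hmem1 : x + h ∈ ball x r := by
    rw [mem_ball, Real.dist_eq, show x + h - x = h by ring, abs_of_pos hh]; exact hhr
  have hmem2 : x ∈ ball x r := mem_ball_self (hh.trans hhr)
  exact le_iSup₂_of_le (x + h) hmem1 (le_iSup₂_of_le x hmem2 le_rfl)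

lemma keyFTC {f : ℝ → ℝ}
    (hf : ∀ x : ℝ, ∃ r > 0, ∃ K : ℝ≥0, LipschitzOnWith K f (ball x r)) {a b : ℝ} (hab : a < b) :
    ENNReal.ofReal (f b - f a) ≤ ∫⁻ x in Ioo a b, lipa f x := by
  have hfc : Continuous f := continuous_of_locLip hf
  obtain ⟨K, hK⟩ := exists_lipschitzOnWith_Icc f hf (a - 2) (b + 2)
  have hKd := lipschitzOnWith_iff_dist_le_mul.mp hK
  set F : ℕ → ℝ → ℝ≥0∞ := fun n => LrQ f (2 / (n + 1)) with hF
  have hrpos : ∀ n : ℕ, (0:ℝ) < 2 / (n + 1) := fun n => by positivity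
  have hmeas : ∀ n, Measurable (F n) := fun n => LrQ_measurable f _
  have hanti : Antitone F := by
    intro n m hnm x
    apply LrQ_mono
    gcongr
  -- pointwise identification of lipa with the countable infimum
  have hpt : ∀ x : ℝ, lipa f x = ⨅ n, F n x := by
    intro x
    refine le_antisymm (le_iInf fun n => lipa_le_LrQ f (hrpos n) x) ?_
    rw [lipa_eq_iInf]
    refine le_iInf fun r => le_iInf fun hr => ?_
    obtain ⟨n, hn⟩ := exists_nat_gt (2 / r)
    have h2r : (2 : ℝ) / (n + 1) ≤ r := by
      rw [div_le_iff₀ (by positivity)]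
      have h1 : 2 / r < (n : ℝ) + 1 := hn.trans (by linarith)
      calc (2:ℝ) = (2 / r) * r := by field_simp
      _ ≤ ((n:ℝ) + 1) * r := by gcongr
      _ = r * ((n:ℝ) + 1) := by ring
    exact iInf_le_of_le n (LrQ_mono f h2r x)
  -- finiteness of the first integral
  have hfin : ∫⁻ x in Ioo a b, F 0 x ≠ ⊤ := by
    have hb : ∫⁻ x in Ioo a b, F 0 x ≤ (K : ℝ≥0∞) * volume (Ioo a b) := by
      rw [← setLIntegral_const (Ioo a b) (K : ℝ≥0∞)]
      refine setLIntegral_mono measurable_const fun x hx => ?_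
      refine LrQ_le_of_lipschitzOnWith (hK.mono ?_)
      intro y hy
      rw [mem_ball, Real.dist_eq] at hy
      have hy' := abs_lt.mp hy
      norm_num at hy'
      constructor
      · simp only [mem_Ioo] at hx; nlinarith [hx.1, hy'.1]
      · simp only [mem_Ioo] at hx; nlinarith [hx.2, hy'.2]
    refine ne_top_of_le_ne_top ?_ hb
    rw [Real.volume_Ioo]
    exact ENNReal.mul_ne_top ENNReal.coe_ne_top ENNReal.ofReal_ne_top
  -- main estimate for each n
  have step2 : ∀ n : ℕ, ENNReal.ofReal (f b - f a) ≤ ∫⁻ x in Ioo a b, F n x := by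
    intro n
    have key : ∀ m : ℕ, n ≤ m →
        ENNReal.ofReal (f b - f a - 2 * K * (1 / (m + 1))) ≤ ∫⁻ x in Ioo a b, F n x := by
      intro m hnm
      set h : ℝ := 1 / (m + 1) with hhdef
      have hh : 0 < h := by positivity
      have hh1 : h ≤ 1 := by
        rw [hhdef, div_le_one (by positivity)]; linarith [Nat.cast_nonneg (α := ℝ) m]
      have hhr : h < 2 / (n + 1) := by
        have : h ≤ 1 / (n + 1) := by
          rw [hhdef]
          gcongr
        have he : (2:ℝ) / (n+1) = 1/(n+1) + 1/(n+1) := by ring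
        have hp : (0:ℝ) < 1/(n+1) := by positivity
        linarith
      -- the real-variable estimate
      set g : ℝ → ℝ := fun x => (f (x + h) - f x) / h with hgdef
      have hgc : Continuous g := ((hfc.comp (continuous_id.add continuous_const)).sub hfc).div_const h
      have hint : ∀ p q : ℝ, IntervalIntegrable f volume p q := fun p q => hfc.intervalIntegrable p q
      have I1 : ∫ x in a..b, (f (x + h) - f x) =
          (∫ x in b..(b + h), f x) - ∫ x in a..(a + h), f x := by
        have hshift : Continuous fun x : ℝ => f (x + h) := hfc.comp (by continuity)
        rw [intervalIntegral.integral_sub (hshift.intervalIntegrable a b) (hint a b)]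
        rw [intervalIntegral.integral_comp_add_right f h]
        have A : (∫ x in a..(a+h), f x) + ∫ x in (a+h)..(b+h), f x = ∫ x in a..(b+h), f x :=
          intervalIntegral.integral_add_adjacent_intervals (hint _ _) (hint _ _)
        have B : (∫ x in a..b, f x) + ∫ x in b..(b+h), f x = ∫ x in a..(b+h), f x :=
          intervalIntegral.integral_add_adjacent_intervals (hint _ _) (hint _ _)
        linarith
      have hbI : ∀ y ∈ Icc b (b + h), f b - K * h ≤ f y := by
        intro y hy
        have hmem1 : b ∈ Icc (a-2) (b+2) := ⟨by linarith, by linarith⟩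
        have hmem2 : y ∈ Icc (a-2) (b+2) := ⟨by linarith [hy.1], by linarith [hy.2]⟩
        have hd := hKd b hmem1 y hmem2
        rw [Real.dist_eq, Real.dist_eq] at hd
        have h1 : |b - y| ≤ h := by rw [abs_le]; constructor <;> linarith [hy.1, hy.2]
        have h2 : (K:ℝ) * |b - y| ≤ K * h := by gcongr
        have h3 : f b - f y ≤ |f b - f y| := le_abs_self _
        linarith
      have haI : ∀ y ∈ Icc a (a + h), f y ≤ f a + K * h := by
        intro y hy
        have hmem1 : a ∈ Icc (a-2) (b+2) := ⟨by linarith, by linarith⟩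
        have hmem2 : y ∈ Icc (a-2) (b+2) := ⟨by linarith [hy.1], by linarith [hy.2, hab]⟩
        have hd := hKd a hmem1 y hmem2
        rw [Real.dist_eq, Real.dist_eq] at hd
        have h1 : |a - y| ≤ h := by rw [abs_le]; constructor <;> linarith [hy.1, hy.2]
        have h2 : (K:ℝ) * |a - y| ≤ K * h := by gcongr
        have h3 : f y - f a ≤ |f a - f y| := by rw [abs_sub_comm]; exact le_abs_self _
        linarith
      have bound1 : (f b - K * h) * h ≤ ∫ x in b..(b + h), f x := by
        have := intervalIntegral.integral_mono_on (by linarith : b ≤ b + h)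
          (intervalIntegrable_const) (hint b (b+h)) hbI
        rwa [intervalIntegral.integral_const, smul_eq_mul,
          show b + h - b = h by ring, mul_comm] at this
      have bound2 : ∫ x in a..(a + h), f x ≤ (f a + K * h) * h := by
        have := intervalIntegral.integral_mono_on (by linarith : a ≤ a + h)
          (hint a (a+h)) (intervalIntegrable_const) haI
        rwa [intervalIntegral.integral_const, smul_eq_mul,
          show a + h - a = h by ring, mul_comm] at this
      have Ireal : f b - f a - 2 * K * h ≤ ∫ x in a..b, g x := by
        have : ∫ x in a..b, g x = (∫ x in a..b, (f (x + h) - f x)) / h := by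
          rw [hgdef, ← intervalIntegral.integral_div]
        rw [this, le_div_iff₀ hh, I1]
        nlinarith [bound1, bound2]
      -- pass to lintegral
      have hstep : ENNReal.ofReal (∫ x in a..b, g x) ≤ ∫⁻ x in Ioo a b, F n x := by
        set gp : ℝ → ℝ := fun x => max (g x) 0 with hgp
        have hgpc : Continuous gp := hgc.max continuous_const
        have hgi : IntegrableOn g (Ioo a b) volume :=
          (hgc.integrableOn_Icc).mono_set Ioo_subset_Icc_self
        have hgpi : IntegrableOn gp (Ioo a b) volume :=
          (hgpc.integrableOn_Icc).mono_set Ioo_subset_Icc_self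
        have e1 : ∫ x in a..b, g x = ∫ x in Ioo a b, g x := by
          rw [intervalIntegral.integral_of_le hab.le, MeasureTheory.integral_Ioc_eq_integral_Ioo]
        have e2 : ∫ x in Ioo a b, g x ≤ ∫ x in Ioo a b, gp x :=
          integral_mono hgi hgpi fun x => le_max_left _ _
        have e3 : ENNReal.ofReal (∫ x in Ioo a b, gp x) = ∫⁻ x in Ioo a b, ENNReal.ofReal (gp x) :=
          ofReal_integral_eq_lintegral_ofReal hgpi (ae_of_all _ fun x => le_max_right _ _)
        have e4 : ∫⁻ x in Ioo a b, ENNReal.ofReal (gp x) ≤ ∫⁻ x in Ioo a b, F n x := by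
          refine lintegral_mono fun x => ?_
          have : ENNReal.ofReal (gp x) = ENNReal.ofReal (g x) := by
            rcases le_total (g x) 0 with hc | hc
            · rw [hgp]; simp only [max_eq_right hc, ENNReal.ofReal_of_nonpos hc, ENNReal.ofReal_zero]
            · rw [hgp]; simp only [max_eq_left hc]
          rw [this, hgdef]
          exact ofReal_quot_le_LrQ f hh hhr x
        calc ENNReal.ofReal (∫ x in a..b, g x) ≤ ENNReal.ofReal (∫ x in Ioo a b, gp x) := by
              rw [e1]; exact ENNReal.ofReal_le_ofReal e2
        _ = ∫⁻ x in Ioo a b, ENNReal.ofReal (gp x) := e3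
        _ ≤ ∫⁻ x in Ioo a b, F n x := e4
      exact (ENNReal.ofReal_le_ofReal Ireal).trans hstep
    -- let m → ∞
    have htend : Tendsto (fun m : ℕ => ENNReal.ofReal (f b - f a - 2 * K * (1 / (m + 1))))
        atTop (𝓝 (ENNReal.ofReal (f b - f a))) := by
      have : Tendsto (fun m : ℕ => f b - f a - 2 * K * (1 / (m + 1))) atTop (𝓝 (f b - f a)) := by
        have h0 : Tendsto (fun m : ℕ => (1:ℝ) / (m + 1)) atTop (𝓝 0) :=
          tendsto_one_div_add_atTop_nhds_zero_nat
        have := h0.const_mul (2 * (K:ℝ))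
        simpa using tendsto_const_nhds.sub this
      exact (ENNReal.continuous_ofReal.tendsto _).comp this
    refine le_of_tendsto htend ?_
    filter_upwards [eventually_ge_atTop n] with m hm using key m hm
  -- assemble
  have : ∫⁻ x in Ioo a b, lipa f x = ⨅ n, ∫⁻ x in Ioo a b, F n x := by
    rw [show (∫⁻ x in Ioo a b, lipa f x) = ∫⁻ x in Ioo a b, ⨅ n, F n x from
      lintegral_congr fun x => hpt x]
    exact lintegral_iInf (fun n => hmeas n) hanti hfin
  rw [this]
  exact le_iInf step2
lemma totVar_univ (μ : Measure X) (f : X → ℝ) : totVar μ f univ = totVarOpen μ f univ := by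
  unfold totVar
  apply le_antisymm
  · exact iInf_le_of_le univ (iInf_le_of_le isOpen_univ (iInf_le _ (subset_refl _)))
  · exact le_iInf fun A => le_iInf fun _ => le_iInf fun h => by rw [univ_subset_iff.mp h]

lemma per_eq (μ : Measure X) (E : Set X) : per μ E = totVarOpen μ (E.indicator 1) univ := by
  rw [per, perIn, totVar_univ]

lemma exists_small (g : ℝ → ℝ) (v c d ε : ℝ) (hcd : c < d) (hε : 0 < ε)
    (h : ∫⁻ x in Ioo c d, ENNReal.ofReal |g x - v| < ENNReal.ofReal (ε * (d - c))) :
    ∃ x ∈ Ioo c d, |g x - v| < ε := by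
  by_contra hcon
  push_neg at hcon
  have hle : ENNReal.ofReal (ε * (d - c)) ≤ ∫⁻ x in Ioo c d, ENNReal.ofReal |g x - v| := by
    have h1 : ENNReal.ofReal (ε * (d - c)) = ENNReal.ofReal ε * volume (Ioo c d) := by
      rw [Real.volume_Ioo, ← ENNReal.ofReal_mul hε.le]
    rw [h1, ← setLIntegral_const (Ioo c d) (ENNReal.ofReal ε),
      ← lintegral_indicator measurableSet_Ioo, ← lintegral_indicator measurableSet_Ioo]
    refine lintegral_mono fun x => ?_
    by_cases hx : x ∈ Ioo c d
    · simp only [indicator_of_mem hx]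
      exact ENNReal.ofReal_le_ofReal (hcon x hx)
    · simp [indicator_of_notMem hx]
  exact absurd h (not_lt.mpr hle)

lemma per_ge_two (E : Set ℝ) (p q q' s s' t : ℝ)
    (h1 : p < q) (h2 : q ≤ q') (h3 : q' < s) (h4 : s ≤ s') (h5 : s' < t)
    (hE0 : ∀ x ∈ Ioo p q, E.indicator (1 : ℝ → ℝ) x = 0)
    (hE1 : ∀ x ∈ Ioo q' s, E.indicator (1 : ℝ → ℝ) x = 1)
    (hE2 : ∀ x ∈ Ioo s' t, E.indicator (1 : ℝ → ℝ) x = 0) :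
    (2 : ℝ≥0∞) ≤ per volume E := by
  rw [per_eq]
  refine le_iInf fun fn => le_iInf fun hlip => le_iInf fun hconv => ?_
  have main : ∀ ε : ℝ, 0 < ε →
      ENNReal.ofReal (2 - 4 * ε) ≤ atTop.liminf fun n => ∫⁻ x in univ, lipa (fn n) x := by
    intro ε hε
    have hconv' : ∀ (c d : ℝ), c < d → (∀ x ∈ Ioo c d, E.indicator (1 : ℝ → ℝ) x = (if c < 0 then 0 else 1)) → True := fun _ _ _ _ => trivial
    -- eventual smallness of the three integrals
    have hev : ∀ (c d : ℝ), c < d →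
        ∀ᶠ n in atTop, ∫⁻ x in Ioo c d, ENNReal.ofReal |fn n x - E.indicator 1 x| ∂volume <
          ENNReal.ofReal (ε * (d - c)) := by
      intro c d hcd
      have hb := hconv (Ioo c d) (isBounded_Ioo c d)
      rw [Measure.restrict_univ] at hb
      exact hb.eventually_lt_const (by rw [ENNReal.ofReal_pos]; nlinarith)
    have hpos : (0:ℝ) < 2 - 4 * ε ∨ (2 - 4*ε : ℝ) ≤ 0 := lt_or_ge _ _
    rcases hpos with hpos | hpos
    swap
    · rw [ENNReal.ofReal_of_nonpos hpos]; exact zero_le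
    refine le_liminf_of_le (by isBoundedDefault) ?_
    filter_upwards [hev p q h1, hev q' s h3, hev s' t h5] with n ha hm hb
    -- replace the indicator by constants on each interval
    have ea : ∫⁻ x in Ioo p q, ENNReal.ofReal |fn n x - E.indicator 1 x| ∂volume
        = ∫⁻ x in Ioo p q, ENNReal.ofReal |fn n x - 0| ∂volume :=
      setLIntegral_congr_fun measurableSet_Ioo (fun x hx => by beta_reduce; rw [hE0 x hx])
    have em : ∫⁻ x in Ioo q' s, ENNReal.ofReal |fn n x - E.indicator 1 x| ∂volume
        = ∫⁻ x in Ioo q' s, ENNReal.ofReal |fn n x - 1| ∂volume :=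
      setLIntegral_congr_fun measurableSet_Ioo (fun x hx => by beta_reduce; rw [hE1 x hx])
    have eb : ∫⁻ x in Ioo s' t, ENNReal.ofReal |fn n x - E.indicator 1 x| ∂volume
        = ∫⁻ x in Ioo s' t, ENNReal.ofReal |fn n x - 0| ∂volume :=
      setLIntegral_congr_fun measurableSet_Ioo (fun x hx => by beta_reduce; rw [hE2 x hx])
    rw [ea] at ha; rw [em] at hm; rw [eb] at hb
    obtain ⟨xa, hxa, hxa'⟩ := exists_small (fn n) 0 p q ε h1 hε ha
    obtain ⟨xm, hxm, hxm'⟩ := exists_small (fn n) 1 q' s ε h3 hε hm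
    obtain ⟨xb, hxb, hxb'⟩ := exists_small (fn n) 0 s' t ε h5 hε hb
    have ham : xa < xm := lt_of_lt_of_le hxa.2 (le_trans h2 hxm.1.le)
    have hmb : xm < xb := lt_of_lt_of_le hxm.2 (le_trans h4 hxb.1.le)
    have hfloc : ∀ x : ℝ, ∃ r > 0, ∃ K : ℝ≥0, LipschitzOnWith K (fn n) (ball x r) := by
      intro x
      obtain ⟨r, hr, _, K, hK⟩ := hlip n x (mem_univ x)
      exact ⟨r, hr, K, hK⟩
    have hfloc' : ∀ x : ℝ, ∃ r > 0, ∃ K : ℝ≥0, LipschitzOnWith K (fun y => - fn n y) (ball x r) := by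
      intro x
      obtain ⟨r, hr, K, hK⟩ := hfloc x
      exact ⟨r, hr, K, hK.neg⟩
    have key1 : ENNReal.ofReal (fn n xm - fn n xa) ≤ ∫⁻ x in Ioo xa xm, lipa (fn n) x :=
      keyFTC hfloc ham
    have key2 : ENNReal.ofReal (fn n xm - fn n xb) ≤ ∫⁻ x in Ioo xm xb, lipa (fn n) x := by
      have := keyFTC hfloc' hmb
      rw [show (fun y => - fn n y) xb - (fun y => - fn n y) xm = fn n xm - fn n xb by simp; ring] at this
      rwa [show (∫⁻ x in Ioo xm xb, lipa (fun y => - fn n y) x)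
        = ∫⁻ x in Ioo xm xb, lipa (fn n) x from lintegral_congr fun x => lipa_neg (fn n) x] at this
    have habs : |fn n xa - 0| < ε := hxa'
    have hmabs : |fn n xm - 1| < ε := hxm'
    have hbabs : |fn n xb - 0| < ε := hxb'
    rw [abs_lt] at habs hmabs hbabs
    have hsum : ENNReal.ofReal (2 - 4 * ε) ≤
        ENNReal.ofReal (fn n xm - fn n xa) + ENNReal.ofReal (fn n xm - fn n xb) := by
      have e1 : (2 - 4*ε : ℝ) ≤ (fn n xm - fn n xa) + (fn n xm - fn n xb) := by linarith
      calc ENNReal.ofReal (2 - 4 * ε)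
          ≤ ENNReal.ofReal ((fn n xm - fn n xa) + (fn n xm - fn n xb)) :=
            ENNReal.ofReal_le_ofReal e1
      _ ≤ _ := ENNReal.ofReal_add_le
    have hdisj : Disjoint (Ioo xa xm) (Ioo xm xb) := by
      rw [Set.disjoint_left]
      intro x hx hx'
      exact absurd hx.2 (not_lt.mpr hx'.1.le)
    calc ENNReal.ofReal (2 - 4 * ε)
        ≤ ENNReal.ofReal (fn n xm - fn n xa) + ENNReal.ofReal (fn n xm - fn n xb) := hsum
    _ ≤ (∫⁻ x in Ioo xa xm, lipa (fn n) x) + ∫⁻ x in Ioo xm xb, lipa (fn n) x :=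
        add_le_add key1 key2
    _ = ∫⁻ x in Ioo xa xm ∪ Ioo xm xb, lipa (fn n) x :=
        (lintegral_union measurableSet_Ioo hdisj).symm
    _ ≤ ∫⁻ x in univ, lipa (fn n) x := lintegral_mono_set (subset_univ _)
  by_contra hlt
  push_neg at hlt
  set c := atTop.liminf fun n => ∫⁻ x in univ, lipa (fn n) x with hc
  have hctop : c ≠ ⊤ := fun h => by rw [h] at hlt; exact absurd hlt (by simp)
  have hc2 : c.toReal < 2 := by
    have := ENNReal.toReal_lt_toReal hctop (by norm_num : (2:ℝ≥0∞) ≠ ⊤) |>.mpr hlt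
    simpa using this
  set ε := (2 - c.toReal) / 8 with hεdef
  have hε : 0 < ε := by rw [hεdef]; linarith
  have := main ε hε
  have hgt : c < ENNReal.ofReal (2 - 4 * ε) := by
    rw [← ENNReal.ofReal_toReal hctop]
    have h0 : 0 ≤ c.toReal := ENNReal.toReal_nonneg
    rw [ENNReal.ofReal_lt_ofReal_iff (by rw [hεdef]; linarith)]
    rw [hεdef]
    have h0 : 0 ≤ c.toReal := ENNReal.toReal_nonneg
    linarith
  exact absurd this (not_le.mpr hgt)
lemma per_le_two (E : Set ℝ) (u v w : ℝ) (huv : u < v)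
    (hout : ∀ x : ℝ, x ≤ u ∨ v ≤ x → E.indicator (1:ℝ→ℝ) x = 0)
    (hin : ∀ x : ℝ, u < x → x < v → x ≠ w → E.indicator (1:ℝ→ℝ) x = 1) :
    per volume E ≤ 2 := by
  rw [per_eq]
  set fn : ℕ → ℝ → ℝ := fun n x =>
    max 0 (min 1 (min (((n:ℝ)+1) * (x - u)) (((n:ℝ)+1) * (v - x)))) with hfn
  have hc : ∀ n : ℕ, (0:ℝ) < (n:ℝ) + 1 := fun n => by positivity
  -- Lipschitz
  have hlipW : ∀ n : ℕ, LipschitzWith ((n:ℝ)+1).toNNReal (fn n) := by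
    intro n
    set cn := (n:ℝ) + 1 with hcn
    have l1 : LipschitzWith cn.toNNReal (fun x => cn * (x - u)) := by
      refine LipschitzWith.of_dist_le_mul fun x y => ?_
      rw [Real.dist_eq, Real.dist_eq, Real.coe_toNNReal _ (hc n).le,
        show cn * (x - u) - cn * (y - u) = cn * (x - y) by ring, abs_mul, abs_of_pos (hc n)]
    have l2 : LipschitzWith cn.toNNReal (fun x => cn * (v - x)) := by
      refine LipschitzWith.of_dist_le_mul fun x y => ?_
      rw [Real.dist_eq, Real.dist_eq, Real.coe_toNNReal _ (hc n).le,
        show cn * (v - x) - cn * (v - y) = cn * (y - x) by ring, abs_mul, abs_of_pos (hc n),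
        abs_sub_comm]
    have l3 : LipschitzWith cn.toNNReal (fun x => min (cn * (x - u)) (cn * (v - x))) := by
      have := l1.min l2; simpa using this
    have l4 : LipschitzWith cn.toNNReal
        (fun x => min 1 (min (cn * (x - u)) (cn * (v - x)))) := by
      have := (LipschitzWith.const (1:ℝ) (α := ℝ)).min l3; simpa using this
    have l5 := (LipschitzWith.const (0:ℝ) (α := ℝ)).max l4
    simpa using l5
  -- flat values
  have fzero : ∀ n : ℕ, ∀ y : ℝ, y ≤ u ∨ v ≤ y → fn n y = 0 := by
    intro n y hy
    have : min (((n:ℝ)+1) * (y - u)) (((n:ℝ)+1) * (v - y)) ≤ 0 := by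
      rcases hy with hy | hy
      · exact le_trans (min_le_left _ _) (mul_nonpos_of_nonneg_of_nonpos (hc n).le (by linarith))
      · exact le_trans (min_le_right _ _) (mul_nonpos_of_nonneg_of_nonpos (hc n).le (by linarith))
    rw [hfn]
    simp only
    rw [max_eq_left (le_trans (min_le_right _ _) this)]
  have fone : ∀ n : ℕ, ∀ y : ℝ, u + 1/((n:ℝ)+1) ≤ y → y ≤ v - 1/((n:ℝ)+1) → fn n y = 1 := by
    intro n y hy1 hy2
    have hinv : ((n:ℝ)+1) * (1/((n:ℝ)+1)) = 1 := by field_simp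
    have e1 : (1:ℝ) ≤ ((n:ℝ)+1) * (y - u) := by
      have hyy : (1:ℝ)/((n:ℝ)+1) ≤ y - u := by linarith
      calc (1:ℝ) = ((n:ℝ)+1) * (1/((n:ℝ)+1)) := hinv.symm
      _ ≤ ((n:ℝ)+1) * (y - u) := mul_le_mul_of_nonneg_left hyy (hc n).le
    have e2 : (1:ℝ) ≤ ((n:ℝ)+1) * (v - y) := by
      have hyy : (1:ℝ)/((n:ℝ)+1) ≤ v - y := by linarith
      calc (1:ℝ) = ((n:ℝ)+1) * (1/((n:ℝ)+1)) := hinv.symm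
      _ ≤ ((n:ℝ)+1) * (v - y) := mul_le_mul_of_nonneg_left hyy (hc n).le
    rw [hfn]
    simp only
    rw [min_eq_left (le_min e1 e2), max_eq_right zero_le_one]
  have fbd : ∀ n : ℕ, ∀ y : ℝ, 0 ≤ fn n y ∧ fn n y ≤ 1 := by
    intro n y
    exact ⟨le_max_left _ _, max_le zero_le_one (min_le_left _ _)⟩
  -- lipa bound
  set Cn : ℕ → Set ℝ := fun n => Icc u (u + 1/((n:ℝ)+1)) ∪ Icc (v - 1/((n:ℝ)+1)) v with hCn
  have hCmeas : ∀ n, MeasurableSet (Cn n) := fun n => (measurableSet_Icc).union measurableSet_Icc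
  have hlipa : ∀ n : ℕ, ∀ x : ℝ,
      lipa (fn n) x ≤ (Cn n).indicator (fun _ => (((n:ℝ)+1).toNNReal : ℝ≥0∞)) x := by
    intro n x
    by_cases hx : x ∈ Cn n
    · rw [indicator_of_mem hx]
      exact lipa_le_of_lipschitzWith (hlipW n) x
    · rw [indicator_of_notMem hx]
      have h1n : (0:ℝ) < 1/((n:ℝ)+1) := by positivity
      rcases lt_or_ge x u with hxu | hxu
      · rw [lipa_eq_zero_of_const (show (0:ℝ) < u - x by linarith) 0
          (fun y hy => fzero n y (Or.inl (by
            rw [mem_ball, Real.dist_eq] at hy; have := abs_lt.mp hy; linarith)))]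
      rcases lt_or_ge v x with hvx | hvx
      · rw [lipa_eq_zero_of_const (show (0:ℝ) < x - v by linarith) 0
          (fun y hy => fzero n y (Or.inr (by
            rw [mem_ball, Real.dist_eq] at hy; have := abs_lt.mp hy; linarith)))]
      · -- u ≤ x ≤ v, not in the ramps
        rw [hCn] at hx
        simp only [mem_union, mem_Icc, not_or, not_and_or, not_le] at hx
        have hx1 : u + 1/((n:ℝ)+1) < x := hx.1.resolve_left (not_lt.mpr hxu)
        have hx2 : x < v - 1/((n:ℝ)+1) := hx.2.resolve_right (not_lt.mpr hvx)
        rw [lipa_eq_zero_of_const (show (0:ℝ) < min (x - (u + 1/((n:ℝ)+1))) (v - 1/((n:ℝ)+1) - x)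
            by apply lt_min <;> linarith) 1 (fun y hy => by
          rw [mem_ball, Real.dist_eq] at hy
          have := abs_lt.mp hy
          have m1 := lt_min_iff.mp hy
          refine fone n y ?_ ?_
          · have := (abs_lt.mp (lt_of_lt_of_le hy (min_le_left _ _))).1; linarith
          · have := (abs_lt.mp (lt_of_lt_of_le hy (min_le_right _ _))).2; linarith)]
  -- integral bound
  have hint : ∀ n : ℕ, (∫⁻ x in univ, lipa (fn n) x ∂volume) ≤ 2 := by
    intro n
    have h1 : (∫⁻ x in univ, lipa (fn n) x ∂volume)
        ≤ ∫⁻ x, (Cn n).indicator (fun _ => (((n:ℝ)+1).toNNReal : ℝ≥0∞)) x ∂volume := by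
      rw [setLIntegral_univ]
      exact lintegral_mono (hlipa n)
    have h2 : (∫⁻ x, (Cn n).indicator (fun _ => (((n:ℝ)+1).toNNReal : ℝ≥0∞)) x ∂volume)
        = (((n:ℝ)+1).toNNReal : ℝ≥0∞) * volume (Cn n) := by
      rw [lintegral_indicator (hCmeas n), setLIntegral_const]
    have h3 : volume (Cn n) ≤ ENNReal.ofReal (1/((n:ℝ)+1)) + ENNReal.ofReal (1/((n:ℝ)+1)) := by
      refine (measure_union_le _ _).trans ?_
      rw [Real.volume_Icc, Real.volume_Icc]
      apply add_le_add <;> apply ENNReal.ofReal_le_ofReal <;> linarith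
    calc (∫⁻ x in univ, lipa (fn n) x ∂volume)
        ≤ (((n:ℝ)+1).toNNReal : ℝ≥0∞) * volume (Cn n) := h1.trans (le_of_eq h2)
    _ ≤ ENNReal.ofReal ((n:ℝ)+1) * (ENNReal.ofReal (1/((n:ℝ)+1)) + ENNReal.ofReal (1/((n:ℝ)+1))) := by
        rw [show ((((n:ℝ)+1).toNNReal : ℝ≥0∞)) = ENNReal.ofReal ((n:ℝ)+1) from rfl]
        exact mul_le_mul_right h3 _
    _ = ENNReal.ofReal (((n:ℝ)+1) * (1/((n:ℝ)+1) + 1/((n:ℝ)+1))) := by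
        rw [← ENNReal.ofReal_add (by positivity) (by positivity),
          ENNReal.ofReal_mul (hc n).le]
    _ = ENNReal.ofReal 2 := by
        congr 1
        field_simp
        try norm_num
    _ = 2 := by norm_num
  -- local Lipschitz
  have hloc : ∀ n, LocLipOn (fn n) univ := by
    intro n x _
    exact ⟨1, one_pos, subset_univ _, ((n:ℝ)+1).toNNReal, (hlipW n).lipschitzOnWith⟩
  -- L1 convergence
  have hDn : ∀ n : ℕ, ∀ x : ℝ, ENNReal.ofReal |fn n x - E.indicator 1 x| ≤
      (Icc u (u + 1/((n:ℝ)+1)) ∪ Icc (v - 1/((n:ℝ)+1)) v ∪ {w}).indicator (fun _ => (1:ℝ≥0∞)) x := by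
    intro n x
    set Dn := Icc u (u + 1/((n:ℝ)+1)) ∪ Icc (v - 1/((n:ℝ)+1)) v ∪ {w} with hDndef
    by_cases hx : x ∈ Dn
    · rw [indicator_of_mem hx]
      have hb := fbd n x
      have hind : E.indicator (1:ℝ→ℝ) x = 0 ∨ E.indicator (1:ℝ→ℝ) x = 1 := by
        by_cases hxE : x ∈ E
        · right; simp [indicator_of_mem hxE]
        · left; simp [indicator_of_notMem hxE]
      rw [show (1:ℝ≥0∞) = ENNReal.ofReal 1 by norm_num]
      apply ENNReal.ofReal_le_ofReal
      rw [abs_le]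
      rcases hind with h | h <;> rw [h] <;> constructor <;> linarith [hb.1, hb.2]
    · rw [indicator_of_notMem hx]
      have h1n : (0:ℝ) < 1/((n:ℝ)+1) := by positivity
      rw [hDndef] at hx
      simp only [mem_union, mem_Icc, mem_singleton_iff, not_or, not_and_or, not_le] at hx
      have hxw : x ≠ w := hx.2
      have heq : fn n x = E.indicator (1:ℝ→ℝ) x := by
        rcases lt_or_ge x u with hxu | hxu
        · rw [fzero n x (Or.inl hxu.le), hout x (Or.inl hxu.le)]
        rcases lt_or_ge v x with hvx | hvx
        · rw [fzero n x (Or.inr hvx.le), hout x (Or.inr hvx.le)]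
        have hx1 : u + 1/((n:ℝ)+1) < x := hx.1.1.resolve_left (not_lt.mpr hxu)
        have hx2 : x < v - 1/((n:ℝ)+1) := hx.1.2.resolve_right (not_lt.mpr hvx)
        rw [fone n x hx1.le hx2.le, hin x (by linarith) (by linarith) hxw]
      rw [heq]
      simp
  have hconv : TendstoL1loc (volume.restrict univ) fn (E.indicator 1) := by
    intro S hS
    rw [Measure.restrict_univ]
    have hub : ∀ n : ℕ, (∫⁻ x in S, ENNReal.ofReal |fn n x - E.indicator 1 x| ∂volume)
        ≤ ENNReal.ofReal (2/((n:ℝ)+1)) := by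
      intro n
      set Dn := Icc u (u + 1/((n:ℝ)+1)) ∪ Icc (v - 1/((n:ℝ)+1)) v ∪ {w} with hDndef
      have hDmeas : MeasurableSet Dn :=
        ((measurableSet_Icc.union measurableSet_Icc).union (measurableSet_singleton w))
      calc (∫⁻ x in S, ENNReal.ofReal |fn n x - E.indicator 1 x| ∂volume)
          ≤ ∫⁻ x in univ, ENNReal.ofReal |fn n x - E.indicator 1 x| ∂volume :=
            lintegral_mono_set (subset_univ _)
      _ ≤ ∫⁻ x in univ, Dn.indicator (fun _ => (1:ℝ≥0∞)) x ∂volume := by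
            rw [setLIntegral_univ, setLIntegral_univ]
            exact lintegral_mono (hDn n)
      _ = volume Dn := by
            rw [setLIntegral_univ, lintegral_indicator hDmeas, setLIntegral_const, one_mul]
      _ ≤ ENNReal.ofReal (1/((n:ℝ)+1)) + ENNReal.ofReal (1/((n:ℝ)+1)) + 0 := by
            refine (measure_union_le _ _).trans ?_
            apply add_le_add
            · refine (measure_union_le _ _).trans ?_
              rw [Real.volume_Icc, Real.volume_Icc]
              apply add_le_add <;> apply ENNReal.ofReal_le_ofReal <;> linarith
            · rw [Real.volume_singleton]
      _ = ENNReal.ofReal (2/((n:ℝ)+1)) := by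
            rw [add_zero, ← ENNReal.ofReal_add (by positivity) (by positivity)]
            congr 1
            ring
    have hlim : Tendsto (fun n : ℕ => ENNReal.ofReal (2/((n:ℝ)+1))) atTop (𝓝 0) := by
      rw [show (0:ℝ≥0∞) = ENNReal.ofReal 0 by norm_num]
      apply ENNReal.tendsto_ofReal
      have := tendsto_one_div_add_atTop_nhds_zero_nat.const_mul (2:ℝ)
      simp only [mul_zero] at this
      convert this using 2 with n
      ring
    exact tendsto_of_tendsto_of_tendsto_of_le_of_le tendsto_const_nhds hlim
      (fun n => zero_le) hub
  calc totVarOpen volume (E.indicator 1) univ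
      ≤ atTop.liminf fun n => ∫⁻ x in univ, lipa (fn n) x ∂volume := by
        refine iInf_le_of_le fn (iInf_le_of_le hloc (iInf_le_of_le hconv le_rfl))
  _ ≤ 2 := by
      have : atTop.liminf (fun n : ℕ => ∫⁻ x in univ, lipa (fn n) x ∂volume)
          ≤ atTop.liminf (fun _ : ℕ => (2:ℝ≥0∞)) :=
        liminf_le_liminf (Eventually.of_forall hint)
      rwa [liminf_const] at this
lemma perOn_eq_zero : perOn (volume : Measure ℝ) (Ioo (0:ℝ) 1 ∪ Ioo 1 2) (Ioo 0 1) = 0 := by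
  set B : Set ℝ := Ioo (0:ℝ) 1 ∪ Ioo 1 2 with hB
  set g : ℝ → ℝ := (Ioo (0:ℝ) 1).indicator 1 with hg
  have hconst : ∀ x ∈ B, ∃ r > 0, ball x r ⊆ B ∧ ∀ y ∈ ball x r, g y = g x := by
    rintro x (hx | hx)
    · refine ⟨min x (1 - x), by rcases hx with ⟨h1, h2⟩; apply lt_min <;> linarith, ?_, ?_⟩
      · intro y hy
        rw [mem_ball, Real.dist_eq] at hy
        have h1 := (abs_lt.mp (lt_of_lt_of_le hy (min_le_left _ _))).1
        have h2 := (abs_lt.mp (lt_of_lt_of_le hy (min_le_right _ _))).2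
        exact Or.inl ⟨by linarith, by linarith⟩
      · intro y hy
        rw [mem_ball, Real.dist_eq] at hy
        have h1 := (abs_lt.mp (lt_of_lt_of_le hy (min_le_left _ _))).1
        have h2 := (abs_lt.mp (lt_of_lt_of_le hy (min_le_right _ _))).2
        rw [hg, indicator_of_mem (show y ∈ Ioo (0:ℝ) 1 from ⟨by linarith, by linarith⟩),
          indicator_of_mem hx]
        rfl
    · refine ⟨min (x - 1) (2 - x), by rcases hx with ⟨h1, h2⟩; apply lt_min <;> linarith, ?_, ?_⟩
      · intro y hy
        rw [mem_ball, Real.dist_eq] at hy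
        have h1 := (abs_lt.mp (lt_of_lt_of_le hy (min_le_left _ _))).1
        have h2 := (abs_lt.mp (lt_of_lt_of_le hy (min_le_right _ _))).2
        exact Or.inr ⟨by linarith, by linarith⟩
      · intro y hy
        rw [mem_ball, Real.dist_eq] at hy
        have h1 := (abs_lt.mp (lt_of_lt_of_le hy (min_le_left _ _))).1
        have h2 := (abs_lt.mp (lt_of_lt_of_le hy (min_le_right _ _))).2
        rw [hg, indicator_of_notMem (show y ∉ Ioo (0:ℝ) 1 by
            rw [mem_Ioo]; push_neg; intro _; linarith),
          indicator_of_notMem (show x ∉ Ioo (0:ℝ) 1 by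
            rw [mem_Ioo]; push_neg; intro _; linarith [hx.1])]
  have hBopen : IsOpen B := isOpen_Ioo.union isOpen_Ioo
  have hBmeas : MeasurableSet B := hBopen.measurableSet
  apply le_antisymm _ (zero_le)
  rw [perOn, totVar]
  refine iInf_le_of_le B (iInf_le_of_le hBopen (iInf_le_of_le (subset_refl _) ?_))
  rw [totVarOpen]
  refine iInf_le_of_le (fun _ => g) (iInf_le_of_le ?_ (iInf_le_of_le ?_ ?_))
  · intro n x hx
    obtain ⟨r, hr, hsub, hcon⟩ := hconst x hx
    have hlips : LipschitzOnWith 0 g (ball x r) := by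
      rw [lipschitzOnWith_iff_dist_le_mul]
      intro p hp q hq
      rw [hcon p hp, hcon q hq, dist_self]
      simp
    exact ⟨r, hr, hsub, 0, hlips⟩
  · intro S hS
    have : (fun n : ℕ => ∫⁻ x in S, ENNReal.ofReal |g x - g x| ∂((volume.restrict B).restrict B))
        = fun _ => 0 := by
      funext n
      simp [sub_self]
    rw [this]
    exact tendsto_const_nhds
  · have hz : (fun n : ℕ => ∫⁻ x in B, lipa g x ∂(volume.restrict B)) = fun _ => 0 := by
      funext n
      rw [setLIntegral_congr_fun hBmeas (fun x hx => ?_), lintegral_zero]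
      obtain ⟨r, hr, hsub, hcon⟩ := hconst x hx
      exact lipa_eq_zero_of_const hr (g x) hcon
    rw [hz, liminf_const]

theorem perimeter_sum_fails_for_nonclosed' :
    per (volume : Measure ℝ) (Ioo (0:ℝ) 1) +
        per (volume : Measure ℝ) ((Ioo (0:ℝ) 1 ∪ Ioo 1 2) \ Ioo 0 1) = 4 ∧
    per (volume : Measure ℝ) (Ioo (0:ℝ) 1 ∪ Ioo 1 2) +
        2 * perOn (volume : Measure ℝ) (Ioo (0:ℝ) 1 ∪ Ioo 1 2) (Ioo 0 1) = 2 ∧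
    ¬ (per (volume : Measure ℝ) (Ioo (0:ℝ) 1) +
          per (volume : Measure ℝ) ((Ioo (0:ℝ) 1 ∪ Ioo 1 2) \ Ioo 0 1) ≤
        per (volume : Measure ℝ) (Ioo (0:ℝ) 1 ∪ Ioo 1 2) +
          2 * perOn (volume : Measure ℝ) (Ioo (0:ℝ) 1 ∪ Ioo 1 2) (Ioo 0 1)) := by
  have hdiff : (Ioo (0:ℝ) 1 ∪ Ioo 1 2) \ Ioo 0 1 = Ioo (1:ℝ) 2 := by
    rw [union_diff_left]
    ext x
    simp only [mem_diff, mem_Ioo]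
    constructor
    · rintro ⟨h, _⟩; exact h
    · rintro ⟨h1, h2⟩; exact ⟨⟨h1, h2⟩, fun h => absurd h.2 (not_lt.mpr h1.le)⟩
  have hA : per (volume : Measure ℝ) (Ioo (0:ℝ) 1) = 2 := by
    refine le_antisymm ?_ ?_
    · refine per_le_two _ 0 1 0 one_pos ?_ ?_
      · intro x hx
        refine indicator_of_notMem ?_ _
        rw [mem_Ioo]; push_neg
        rcases hx with h | h
        · intro h'; linarith
        · intro _; linarith
      · intro x h1 h2 _
        exact indicator_of_mem (show x ∈ Ioo (0:ℝ) 1 from ⟨h1, h2⟩) _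
    · refine per_ge_two _ (-1) 0 0 1 1 2 (by norm_num) le_rfl one_pos le_rfl one_lt_two ?_ ?_ ?_
      · intro x hx
        refine indicator_of_notMem ?_ _
        rw [mem_Ioo]; push_neg; intro h; linarith [hx.2]
      · intro x hx; exact indicator_of_mem hx _
      · intro x hx
        refine indicator_of_notMem ?_ _
        rw [mem_Ioo]; push_neg; intro _; linarith [hx.1]
  have hC : per (volume : Measure ℝ) (Ioo (1:ℝ) 2) = 2 := by
    refine le_antisymm ?_ ?_
    · refine per_le_two _ 1 2 1 one_lt_two ?_ ?_
      · intro x hx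
        refine indicator_of_notMem ?_ _
        rw [mem_Ioo]; push_neg
        rcases hx with h | h
        · intro h'; linarith
        · intro _; linarith
      · intro x h1 h2 _
        exact indicator_of_mem (show x ∈ Ioo (1:ℝ) 2 from ⟨h1, h2⟩) _
    · refine per_ge_two _ 0 1 1 2 2 3 one_pos le_rfl one_lt_two le_rfl (by norm_num) ?_ ?_ ?_
      · intro x hx
        refine indicator_of_notMem ?_ _
        rw [mem_Ioo]; push_neg; intro h; linarith [hx.2]
      · intro x hx; exact indicator_of_mem hx _
      · intro x hx
        refine indicator_of_notMem ?_ _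
        rw [mem_Ioo]; push_neg; intro _; linarith [hx.1]
  have hB : per (volume : Measure ℝ) (Ioo (0:ℝ) 1 ∪ Ioo 1 2) = 2 := by
    refine le_antisymm ?_ ?_
    · refine per_le_two _ 0 2 1 two_pos ?_ ?_
      · intro x hx
        refine indicator_of_notMem ?_ _
        rw [mem_union, mem_Ioo, mem_Ioo]; push_neg
        rcases hx with h | h
        · constructor <;> { intro h'; linarith }
        · constructor <;> { intro h'; linarith }
      · intro x h1 h2 hw
        refine indicator_of_mem ?_ _
        rcases lt_trichotomy x 1 with h | h | h
        · exact Or.inl ⟨h1, h⟩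
        · exact absurd h hw
        · exact Or.inr ⟨h, h2⟩
    · refine per_ge_two _ (-1) 0 0 1 2 3 (by norm_num) le_rfl one_pos one_le_two (by norm_num) ?_ ?_ ?_
      · intro x hx
        refine indicator_of_notMem ?_ _
        rw [mem_union, mem_Ioo, mem_Ioo]; push_neg
        have h1 := hx.1
        have h2 := hx.2
        constructor <;> { intro h'; linarith }
      · intro x hx
        exact indicator_of_mem (mem_union_left _ hx) _
      · intro x hx
        refine indicator_of_notMem ?_ _
        rw [mem_union, mem_Ioo, mem_Ioo]; push_neg
        have h1 := hx.1
        have h2 := hx.2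
        constructor <;> { intro h'; linarith }
  rw [hdiff, hA, hB, hC, perOn_eq_zero]
  refine ⟨by norm_num, by norm_num, ?_⟩
  norm_num

/-- In `(ℝ, d_eucl, Leb)`, with `B = (0,1) ∪ (1,2)` and `A = (0,1)`:
`Per(A) + Per(B \ A) = 4`, `Per(B) + 2 Per_B(A) = 2`, and so the inequality
`Per(A) + Per(B \ A) ≤ Per(B) + 2 Per_B(A)` fails for this non-closed `B`. -/
theorem perimeter_sum_fails_for_nonclosed :
    per (volume : Measure ℝ) (Ioo (0:ℝ) 1) +
        per (volume : Measure ℝ) ((Ioo (0:ℝ) 1 ∪ Ioo 1 2) \ Ioo 0 1) = 4 ∧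
    per (volume : Measure ℝ) (Ioo (0:ℝ) 1 ∪ Ioo 1 2) +
        2 * perOn (volume : Measure ℝ) (Ioo (0:ℝ) 1 ∪ Ioo 1 2) (Ioo 0 1) = 2 ∧
    ¬ (per (volume : Measure ℝ) (Ioo (0:ℝ) 1) +
          per (volume : Measure ℝ) ((Ioo (0:ℝ) 1 ∪ Ioo 1 2) \ Ioo 0 1) ≤
        per (volume : Measure ℝ) (Ioo (0:ℝ) 1 ∪ Ioo 1 2) +
          2 * perOn (volume : Measure ℝ) (Ioo (0:ℝ) 1 ∪ Ioo 1 2) (Ioo 0 1)) := by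
  exact perimeter_sum_fails_for_nonclosed'
end

section
/- Let Ω ⊆ X be a bounded open set and λ > 0. Set M_λ(A) := Per(A) + λ·m(Ω ∖ A) for A ⊆ Ω, and 𝒞_{Ω,λ} := { A ⊆ Ω closed : M_λ(A) < ∞ }. Define on 𝒞_{Ω,λ} the relation A ≺_λ B if and only if m(A ∖ B) = 0 and M_λ(A) ≤ M_λ(B). Then: (i) every nonincreasing sequence (A_i) in 𝒞_{Ω,λ} satisfies M_λ(⋂_i A_i) ≤ liminf_i M_λ(A_i); (ii) for every C ∈ 𝒞_{Ω,λ}, the set { A ∈ 𝒞_{Ω,λ} : A ≺_λ C } contains a minimal element with respect to ≺_λ, i.e., an element G with G ≺_λ C such that every A ∈ 𝒞_{Ω,λ} with A ≺_λ G satisfies G ≺_λ A. -/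
open MeasureTheory Metric Set Filter ENNReal NNReal Topology

variable {X : Type*} [PseudoMetricSpace X] [MeasurableSpace X]

section AuxLSC

lemma continuous_of_locLipOn {f : X → ℝ} (h : LocLipOn f univ) : Continuous f := by
  rw [continuous_iff_continuousAt]
  intro x
  obtain ⟨r, hr, -, K, hK⟩ := h x (mem_univ x)
  exact hK.continuousOn.continuousAt (ball_mem_nhds x hr)

lemma totVarOpen_univ_le (μ : Measure X) (f : X → ℝ) (fn : ℕ → X → ℝ)
    (h1 : ∀ n, LocLipOn (fn n) univ) (h2 : TendstoL1loc μ fn f) :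
    totVarOpen μ f univ ≤ atTop.liminf fun n => ∫⁻ x, lipa (fn n) x ∂μ := by
  unfold totVarOpen
  refine iInf_le_of_le fn (iInf_le_of_le h1 (iInf_le_of_le (by rwa [Measure.restrict_univ]) ?_))
  simp [Measure.restrict_univ]

lemma tendstoL1loc_congr {ν : Measure X} {f g : X → ℝ} (h : f =ᵐ[ν] g) (fn : ℕ → X → ℝ) :
    TendstoL1loc ν fn f ↔ TendstoL1loc ν fn g := by
  have key : ∀ (n : ℕ) (S : Set X),
      (∫⁻ x in S, ENNReal.ofReal |fn n x - f x| ∂ν)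
        = ∫⁻ x in S, ENNReal.ofReal |fn n x - g x| ∂ν :=
    fun n S => lintegral_congr_ae ((ae_restrict_of_ae h).mono fun x hx => by dsimp only; rw [hx])
  unfold TendstoL1loc
  refine forall₂_congr fun S hS => ?_
  rw [show (fun n => ∫⁻ x in S, ENNReal.ofReal |fn n x - f x| ∂ν)
      = fun n => ∫⁻ x in S, ENNReal.ofReal |fn n x - g x| ∂ν from funext fun n => key n S]

lemma totVarOpen_congr_ae {μ : Measure X} {f g : X → ℝ} (h : f =ᵐ[μ] g) (A : Set X) :
    totVarOpen μ f A = totVarOpen μ g A := by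
  unfold totVarOpen
  refine iInf_congr fun fn => iInf_congr fun _ => ?_
  exact iInf_congr_Prop (tendstoL1loc_congr (ae_restrict_of_ae h) fn) fun _ => rfl

lemma totVar_congr_ae {μ : Measure X} {f g : X → ℝ} (h : f =ᵐ[μ] g) (B : Set X) :
    totVar μ f B = totVar μ g B := by
  unfold totVar
  exact iInf_congr fun A => iInf_congr fun _ => iInf_congr fun _ => totVarOpen_congr_ae h A

lemma per_congr {μ : Measure X} {E F : Set X}
    (h : E.indicator (1 : X → ℝ) =ᵐ[μ] F.indicator 1) :
    per μ E = per μ F := totVar_congr_ae h univ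

lemma indicator_inter_ae {μ : Measure X} {A B : Set X} (h : μ (A \ B) = 0) :
    (A ∩ B).indicator (1 : X → ℝ) =ᵐ[μ] A.indicator 1 := by
  have hsub : {x | ¬ (A ∩ B).indicator (1 : X → ℝ) x = A.indicator 1 x} ⊆ A \ B := by
    intro x hx
    simp only [mem_setOf_eq] at hx
    by_contra hx2
    apply hx
    by_cases hA : x ∈ A
    · have hB : x ∈ B := by
        by_contra hB
        exact hx2 (show x ∈ A \ B from ⟨hA, hB⟩)
      rw [Set.indicator_of_mem (show x ∈ A ∩ B from ⟨hA, hB⟩), Set.indicator_of_mem hA]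
    · have hAB : x ∉ A ∩ B := fun hh => hA hh.1
      rw [Set.indicator_of_notMem hAB, Set.indicator_of_notMem hA]
  exact (ae_iff).mpr (measure_mono_null hsub h)

lemma Mfun_inter (μ : Measure X) (Ω : Set X) (lam : ℝ)
    {A B : Set X} (h : μ (A \ B) = 0) :
    Mfun μ Ω lam (A ∩ B) = Mfun μ Ω lam A := by
  unfold Mfun
  have hper : per μ (A ∩ B) = per μ A := per_congr (indicator_inter_ae h)
  have hmeas : μ (Ω \ (A ∩ B)) = μ (Ω \ A) := by
    have h1 : (Ω \ (A ∩ B)) \ (Ω \ A) ⊆ A \ B := by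
      intro x hx
      simp only [mem_diff, mem_inter_iff, not_and, not_not] at hx ⊢
      tauto
    have h2 : (Ω \ A) \ (Ω \ (A ∩ B)) = ∅ := by
      ext x
      simp only [mem_diff, mem_inter_iff, mem_empty_iff_false, iff_false, not_and, not_not]
      tauto
    refine measure_congr (ae_eq_set.mpr ⟨measure_mono_null h1 h, ?_⟩)
    rw [h2]; exact measure_empty
  rw [hper, hmeas]

lemma totVarOpen_univ_lsc [OpensMeasurableSpace X] (μ : Measure X) (f : X → ℝ)
    (fs : ℕ → X → ℝ) (hfs : ∀ i, Measurable (fs i)) (hconv : TendstoL1loc μ fs f) :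
    totVarOpen μ f univ ≤ atTop.liminf fun i => totVarOpen μ (fs i) univ := by
  cases isEmpty_or_nonempty X with
  | inl hX =>
    have hμ0 : μ = 0 := by
      ext s hs
      rw [Set.eq_empty_of_isEmpty s]
      simp
    have hle := totVarOpen_univ_le μ f (fun _ _ => 0)
      (fun n x hx => (hX.false x).elim)
      (fun S hS => by
        simp only [hμ0, Measure.restrict_zero, lintegral_zero_measure]
        exact tendsto_const_nhds)
    have h0 : totVarOpen μ f univ ≤ 0 := by
      simpa [hμ0, liminf_const] using hle
    exact h0.trans zero_le
  | inr hX =>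
    obtain ⟨x₀⟩ := hX
    set L := atTop.liminf fun i => totVarOpen μ (fs i) univ with hL
    refine ENNReal.le_of_forall_pos_le_add fun ε hε hLtop => ?_
    have hsel : ∀ N : ℕ, ∃ i, N ≤ i ∧ totVarOpen μ (fs i) univ < L + ε := by
      intro N
      have h1 : (⨅ i, ⨅ (_ : i ≥ N), totVarOpen μ (fs i) univ) ≤ L := by
        rw [hL, liminf_eq_iSup_iInf_of_nat]
        exact le_iSup (fun n => ⨅ i, ⨅ (_ : i ≥ n), totVarOpen μ (fs i) univ) N
      have h2 : (⨅ i, ⨅ (_ : i ≥ N), totVarOpen μ (fs i) univ) < L + ε :=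
        h1.trans_lt (ENNReal.lt_add_right hLtop.ne (by exact_mod_cast hε.ne'))
      obtain ⟨i, hi⟩ := iInf_lt_iff.mp h2
      obtain ⟨hiN, hilt⟩ := iInf_lt_iff.mp hi
      exact ⟨i, hiN, hilt⟩
    choose φ hφge hφlt using hsel
    have hφtend : Tendsto φ atTop atTop := tendsto_atTop_mono hφge tendsto_id
    have hext : ∀ k : ℕ, ∃ g : X → ℝ, LocLipOn g univ ∧
        (∫⁻ x, lipa g x ∂μ) < L + ε ∧
        (∫⁻ x in ball x₀ ((k : ℝ) + 1), ENNReal.ofReal |g x - fs (φ k) x| ∂μ)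
          < (2⁻¹ : ℝ≥0∞) ^ k := by
      intro k
      have h1 := hφlt k
      unfold totVarOpen at h1
      obtain ⟨fn, h2⟩ := iInf_lt_iff.mp h1
      obtain ⟨hfn1, h3⟩ := iInf_lt_iff.mp h2
      obtain ⟨hfn2, h4⟩ := iInf_lt_iff.mp h3
      rw [Measure.restrict_univ] at hfn2
      have hfreq : ∃ᶠ n in atTop, (∫⁻ x in univ, lipa (fn n) x ∂μ) < L + ε :=
        frequently_lt_of_liminf_lt (by isBoundedDefault) h4
      have hpos : (0 : ℝ≥0∞) < (2⁻¹ : ℝ≥0∞) ^ k := ENNReal.pow_pos (by norm_num) k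
      have hev : ∀ᶠ n in atTop,
          (∫⁻ x in ball x₀ ((k : ℝ) + 1), ENNReal.ofReal |fn n x - fs (φ k) x| ∂μ)
            < (2⁻¹ : ℝ≥0∞) ^ k :=
        (hfn2 _ isBounded_ball).eventually_lt_const hpos
      obtain ⟨n, hn1, hn2⟩ := (hfreq.and_eventually hev).exists
      refine ⟨fn n, hfn1 n, ?_, hn2⟩
      simpa [Measure.restrict_univ] using hn1
    choose g hg1 hg2 hg3 using hext
    have hgconv : TendstoL1loc μ g f := by
      intro S hS
      obtain ⟨r, hr⟩ := hS.subset_closedBall x₀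
      have hbound : ∀ᶠ k in atTop,
          (∫⁻ x in S, ENNReal.ofReal |g k x - f x| ∂μ) ≤
            (2⁻¹ : ℝ≥0∞) ^ k + ∫⁻ x in S, ENNReal.ofReal |fs (φ k) x - f x| ∂μ := by
        filter_upwards [eventually_ge_atTop ⌈r⌉₊] with k hk
        have hSb : S ⊆ ball x₀ ((k : ℝ) + 1) := by
          refine hr.trans (closedBall_subset_ball ?_)
          have h1 : r ≤ (⌈r⌉₊ : ℝ) := Nat.le_ceil r
          have h2 : ((⌈r⌉₊ : ℕ) : ℝ) ≤ (k : ℝ) := by exact_mod_cast hk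
          linarith
        calc ∫⁻ x in S, ENNReal.ofReal |g k x - f x| ∂μ
            ≤ ∫⁻ x in S, (ENNReal.ofReal |g k x - fs (φ k) x|
                + ENNReal.ofReal |fs (φ k) x - f x|) ∂μ := by
              refine lintegral_mono fun x => ?_
              calc ENNReal.ofReal |g k x - f x|
                  ≤ ENNReal.ofReal (|g k x - fs (φ k) x| + |fs (φ k) x - f x|) :=
                    ENNReal.ofReal_le_ofReal (abs_sub_le _ _ _)
                _ ≤ _ := ENNReal.ofReal_add_le
          _ = (∫⁻ x in S, ENNReal.ofReal |g k x - fs (φ k) x| ∂μ)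
                + ∫⁻ x in S, ENNReal.ofReal |fs (φ k) x - f x| ∂μ := by
              refine lintegral_add_left ?_ _
              exact ((continuous_of_locLipOn (hg1 k)).measurable.sub
                (hfs (φ k))).abs.ennreal_ofReal
          _ ≤ (2⁻¹ : ℝ≥0∞) ^ k + ∫⁻ x in S, ENNReal.ofReal |fs (φ k) x - f x| ∂μ := by
              gcongr
              exact le_trans (lintegral_mono' (Measure.restrict_mono hSb le_rfl) le_rfl)
                (hg3 k).le
      have htend0 : Tendsto (fun k => (2⁻¹ : ℝ≥0∞) ^ k
          + ∫⁻ x in S, ENNReal.ofReal |fs (φ k) x - f x| ∂μ) atTop (𝓝 0) := by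
        have t1 : Tendsto (fun k : ℕ => (2⁻¹ : ℝ≥0∞) ^ k) atTop (𝓝 0) :=
          ENNReal.tendsto_pow_atTop_nhds_zero_of_lt_one (by norm_num)
        have t2 : Tendsto (fun k => ∫⁻ x in S, ENNReal.ofReal |fs (φ k) x - f x| ∂μ)
            atTop (𝓝 0) := (hconv S hS).comp hφtend
        simpa using t1.add t2
      exact tendsto_of_tendsto_of_tendsto_of_le_of_le' tendsto_const_nhds htend0
        (Eventually.of_forall fun k => zero_le) hbound
    have hfinal := totVarOpen_univ_le μ f g hg1 hgconv
    refine hfinal.trans ?_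
    calc atTop.liminf (fun k => ∫⁻ x, lipa (g k) x ∂μ)
        ≤ atTop.liminf (fun _ : ℕ => L + (ε : ℝ≥0∞)) :=
          liminf_le_liminf (Eventually.of_forall fun k => (hg2 k).le)
      _ = L + ε := liminf_const _

lemma liminf_add_liminf_le (u v : ℕ → ℝ≥0∞) :
    atTop.liminf u + atTop.liminf v ≤ atTop.liminf fun i => u i + v i := by
  rw [liminf_eq_iSup_iInf_of_nat, liminf_eq_iSup_iInf_of_nat, liminf_eq_iSup_iInf_of_nat]
  have hu : Monotone fun n => ⨅ i, ⨅ (_ : i ≥ n), u i := fun a b hab =>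
    le_iInf₂ fun i hi => iInf₂_le i (hab.trans hi)
  have hv : Monotone fun n => ⨅ i, ⨅ (_ : i ≥ n), v i := fun a b hab =>
    le_iInf₂ fun i hi => iInf₂_le i (hab.trans hi)
  rw [ENNReal.iSup_add_iSup_of_monotone hu hv]
  exact iSup_mono fun n => le_iInf₂ fun i hi =>
    add_le_add (iInf₂_le i hi) (iInf₂_le i hi)

lemma Mfun_lsc [BorelSpace X] (μ : Measure X)
    (hμ : ∀ s : Set X, Bornology.IsBounded s → μ s < ⊤)
    (Ω : Set X) (hΩb : Bornology.IsBounded Ω) (lam : ℝ) :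
    ∀ A : ℕ → Set X,
      (∀ i, A i ⊆ Ω ∧ IsClosed (A i) ∧ Mfun μ Ω lam (A i) < ⊤) → Antitone A →
      Mfun μ Ω lam (⋂ i, A i) ≤ atTop.liminf fun i => Mfun μ Ω lam (A i) := by
  intro A hA hanti
  set I := ⋂ i, A i with hIdef
  have hIsub : ∀ i, I ⊆ A i := fun i => iInter_subset A i
  have hAmeas : ∀ i, MeasurableSet (A i) := fun i => (hA i).2.1.measurableSet
  have hImeas : MeasurableSet I := MeasurableSet.iInter fun i => hAmeas i
  have hempty : (⋂ i, A i \ I) = ∅ := by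
    refine eq_empty_iff_forall_notMem.mpr fun x hx => ?_
    rw [mem_iInter] at hx
    exact (hx 0).2 (by rw [hIdef]; exact mem_iInter.mpr fun i => (hx i).1)
  have hdiff : Tendsto (fun i => μ (A i \ I)) atTop (𝓝 0) := by
    have h1 := tendsto_measure_iInter_atTop (μ := μ) (s := fun i => A i \ I)
      (fun i => ((hAmeas i).diff hImeas).nullMeasurableSet)
      (fun a b hab => diff_subset_diff_left (hanti hab))
      ⟨0, ((measure_mono diff_subset).trans_lt (hμ _ (hΩb.subset (hA 0).1))).ne⟩
    rw [hempty, measure_empty] at h1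
    exact h1
  have hconv : TendstoL1loc μ (fun i => (A i).indicator (1 : X → ℝ)) (I.indicator 1) := by
    intro S hS
    have hb : ∀ i, (∫⁻ x in S,
        ENNReal.ofReal |(A i).indicator (1 : X → ℝ) x - I.indicator 1 x| ∂μ)
          ≤ μ (A i \ I) := by
      intro i
      have hpt : ∀ x, ENNReal.ofReal |(A i).indicator (1 : X → ℝ) x - I.indicator 1 x|
          ≤ (A i \ I).indicator (fun _ => (1 : ℝ≥0∞)) x := by
        intro x
        by_cases hxA : x ∈ A i
        · by_cases hxI : x ∈ I
          · simp [Set.indicator_of_mem hxA, Set.indicator_of_mem hxI]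
          · have hmem : x ∈ A i \ I := ⟨hxA, hxI⟩
            simp [Set.indicator_of_mem hxA, Set.indicator_of_notMem hxI,
              Set.indicator_of_mem hmem]
        · have hxI : x ∉ I := fun h => hxA (hIsub i h)
          simp [Set.indicator_of_notMem hxA, Set.indicator_of_notMem hxI]
      calc (∫⁻ x in S,
          ENNReal.ofReal |(A i).indicator (1 : X → ℝ) x - I.indicator 1 x| ∂μ)
          ≤ ∫⁻ x in S, (A i \ I).indicator (fun _ => (1 : ℝ≥0∞)) x ∂μ :=
            lintegral_mono hpt
        _ ≤ ∫⁻ x, (A i \ I).indicator (fun _ => (1 : ℝ≥0∞)) x ∂μ :=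
            lintegral_mono' Measure.restrict_le_self le_rfl
        _ = μ (A i \ I) := by
            rw [lintegral_indicator ((hAmeas i).diff hImeas)]
            simp
    exact tendsto_of_tendsto_of_tendsto_of_le_of_le' tendsto_const_nhds hdiff
      (Eventually.of_forall fun i => zero_le) (Eventually.of_forall hb)
  have hper : per μ I ≤ atTop.liminf fun i => per μ (A i) := by
    have h := totVarOpen_univ_lsc μ (I.indicator 1) (fun i => (A i).indicator 1)
      (fun i => measurable_one.indicator (hAmeas i)) hconv
    unfold per perIn
    rw [totVar_univ]
    refine h.trans (le_of_eq ?_)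
    exact Filter.liminf_congr (Eventually.of_forall fun i => (totVar_univ μ _).symm)
  have hmono2 : Monotone fun i => Ω \ A i := fun a b hab =>
    diff_subset_diff_right (hanti hab)
  have hmeas2 : Tendsto (fun i => μ (Ω \ A i)) atTop (𝓝 (μ (Ω \ I))) := by
    have h2 : (⋃ i, Ω \ A i) = Ω \ I := by rw [hIdef, diff_iInter]
    have h3 := tendsto_measure_iUnion_atTop (μ := μ) hmono2
    rw [h2] at h3
    exact h3
  have hlam2 : Tendsto (fun i => ENNReal.ofReal lam * μ (Ω \ A i)) atTop
      (𝓝 (ENNReal.ofReal lam * μ (Ω \ I))) :=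
    ENNReal.Tendsto.const_mul hmeas2 (Or.inr ENNReal.ofReal_ne_top)
  calc Mfun μ Ω lam I = per μ I + ENNReal.ofReal lam * μ (Ω \ I) := rfl
    _ ≤ (atTop.liminf fun i => per μ (A i))
          + atTop.liminf fun i => ENNReal.ofReal lam * μ (Ω \ A i) :=
        add_le_add hper (le_of_eq hlam2.liminf_eq.symm)
    _ ≤ atTop.liminf fun i => per μ (A i) + ENNReal.ofReal lam * μ (Ω \ A i) :=
        liminf_add_liminf_le _ _
    _ = atTop.liminf fun i => Mfun μ Ω lam (A i) := rfl

lemma stage_abstract (μ : Measure X)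
    (Good : Set X → Prop) (M Φ : Set X → ℝ≥0∞)
    (hMfin : ∀ A, Good A → M A ≠ ⊤)
    (hΦfin : ∀ A, Good A → Φ A ≠ ⊤)
    (hGoodInter : ∀ A B, Good A → Good B → μ (A \ B) = 0 → Good (A ∩ B))
    (hMcongr : ∀ A B, Good A → Good B → μ (A \ B) = 0 → M (A ∩ B) = M A)
    (hΦcongr : ∀ A B, Good A → Good B → μ (A \ B) = 0 → Φ (A ∩ B) = Φ A)
    (hGoodChain : ∀ K : ℕ → Set X, (∀ n, Good (K n)) → Antitone K →
      M (⋂ n, K n) < ⊤ → Good (⋂ n, K n))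
    (hMchain : ∀ K : ℕ → Set X, (∀ n, Good (K n)) → Antitone K →
      M (⋂ n, K n) ≤ atTop.liminf fun n => M (K n))
    (hΦchain : ∀ K : ℕ → Set X, (∀ n, Good (K n)) → Antitone K →
      Φ (⋂ n, K n) ≤ atTop.liminf fun n => Φ (K n))
    (C₀ : Set X) (hC₀ : Good C₀) :
    ∃ G, Good G ∧ G ⊆ C₀ ∧ M G ≤ M C₀ ∧
      ∀ A, Good A → μ (A \ G) = 0 → M A ≤ M G → Φ G ≤ Φ A := by
  classical
  set φinf : Set X → ℝ≥0∞ :=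
    fun S => ⨅ A : {A : Set X // Good A ∧ μ (A \ S) = 0 ∧ M A ≤ M S}, Φ A.1 with hφinf
  have hstep : ∀ (n : ℕ) (S : Set X), Good S →
      ∃ T, Good T ∧ T ⊆ S ∧ M T ≤ M S ∧ Φ T ≤ φinf S + 2⁻¹ ^ n := by
    intro n S hS
    have hSmem : Good S ∧ μ (S \ S) = 0 ∧ M S ≤ M S := ⟨hS, by simp, le_rfl⟩
    have hlt : φinf S < φinf S + 2⁻¹ ^ n := by
      refine ENNReal.lt_add_right ?_ ?_
      · exact ne_top_of_le_ne_top (hΦfin S hS)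
          (iInf_le (fun A : {A : Set X // Good A ∧ μ (A \ S) = 0 ∧ M A ≤ M S} => Φ A.1)
            ⟨S, hSmem⟩)
      · exact pow_ne_zero n (by norm_num)
    obtain ⟨⟨A, hAg, hAnull, hAM⟩, hAlt⟩ := iInf_lt_iff.mp hlt
    refine ⟨A ∩ S, hGoodInter A S hAg hS hAnull, inter_subset_right, ?_, ?_⟩
    · rw [hMcongr A S hAg hS hAnull]; exact hAM
    · rw [hΦcongr A S hAg hS hAnull]; exact hAlt.le
  choose! T hT1 hT2 hT3 hT4 using hstep
  let K : ℕ → Set X := fun n => Nat.rec C₀ (fun n S => T n S) n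
  have hK0 : K 0 = C₀ := rfl
  have hKsucc : ∀ n, K (n + 1) = T n (K n) := fun n => rfl
  have hKgood : ∀ n, Good (K n) := by
    intro n
    induction n with
    | zero => exact hC₀
    | succ n ih => rw [hKsucc]; exact hT1 n (K n) ih
  have hKsub : ∀ n, K (n + 1) ⊆ K n := fun n => by
    rw [hKsucc]; exact hT2 n (K n) (hKgood n)
  have hKanti : Antitone K := antitone_nat_of_succ_le hKsub
  have hKM : ∀ n, M (K (n + 1)) ≤ M (K n) := fun n => by
    rw [hKsucc]; exact hT3 n (K n) (hKgood n)
  have hKManti : Antitone fun n => M (K n) := antitone_nat_of_succ_le hKM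
  have hKΦ : ∀ n, Φ (K (n + 1)) ≤ φinf (K n) + 2⁻¹ ^ n := fun n => by
    rw [hKsucc]; exact hT4 n (K n) (hKgood n)
  set G := ⋂ n, K n with hG
  have hGsubK : ∀ n, G ⊆ K n := fun n => iInter_subset K n
  have hMliminf : M G ≤ atTop.liminf fun n => M (K n) := hMchain K hKgood hKanti
  have hliminf_le : ∀ n, (atTop.liminf fun i => M (K i)) ≤ M (K n) := by
    intro n
    refine le_trans (liminf_le_liminf (eventually_atTop.2 ⟨n, fun i hi => hKManti hi⟩)) ?_
    exact le_of_eq (liminf_const _)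
  have hMG : ∀ n, M G ≤ M (K n) := fun n => hMliminf.trans (hliminf_le n)
  have hMGC : M G ≤ M C₀ := hMG 0
  have hGgood : Good G :=
    hGoodChain K hKgood hKanti (lt_of_le_of_lt hMGC (lt_top_iff_ne_top.2 (hMfin C₀ hC₀)))
  set φω := ⨆ n, φinf (K n) with hφω
  have hΦG : Φ G ≤ φω := by
    have h1 : Φ G ≤ atTop.liminf fun n => Φ (K n) := hΦchain K hKgood hKanti
    have h2 : (atTop.liminf fun n => Φ (K n)) = atTop.liminf fun n => Φ (K (n + 1)) :=
      (liminf_nat_add (fun n => Φ (K n)) 1).symm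
    have h3 : (atTop.liminf fun n => Φ (K (n + 1)))
        ≤ atTop.liminf fun n : ℕ => φω + 2⁻¹ ^ n := by
      refine liminf_le_liminf (Eventually.of_forall fun n => ?_)
      exact (hKΦ n).trans (add_le_add_left (le_iSup (fun n => φinf (K n)) n) _)
    have h4 : Tendsto (fun n : ℕ => φω + 2⁻¹ ^ n) atTop (𝓝 φω) := by
      have h5 := ENNReal.tendsto_pow_atTop_nhds_zero_of_lt_one
        (by norm_num : (2⁻¹ : ℝ≥0∞) < 1)
      simpa using Filter.Tendsto.const_add φω h5
    calc Φ G ≤ _ := h1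
      _ = _ := h2
      _ ≤ _ := h3
      _ = φω := h4.liminf_eq
  refine ⟨G, hGgood, hGsubK 0, hMGC, ?_⟩
  intro A hAg hAnull hAM
  have hmem : ∀ n, Good A ∧ μ (A \ K n) = 0 ∧ M A ≤ M (K n) := fun n =>
    ⟨hAg, measure_mono_null (diff_subset_diff_right (hGsubK n)) hAnull, hAM.trans (hMG n)⟩
  have hφA : ∀ n, φinf (K n) ≤ Φ A := fun n =>
    iInf_le (fun B : {B : Set X // Good B ∧ μ (B \ K n) = 0 ∧ M B ≤ M (K n)} => Φ B.1)
      ⟨A, hmem n⟩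
  exact hΦG.trans (iSup_le hφA)

end AuxLSC

/-- (i) `M_λ` is lower semicontinuous along nonincreasing sequences of
closed sets in `𝒞_{Ω,λ}`; (ii) below every `C ∈ 𝒞_{Ω,λ}` there is a `≺_λ`-minimal element. -/
theorem exists_minimal_element_Mlam
    {X : Type*} [MetricSpace X] [CompleteSpace X] [TopologicalSpace.SeparableSpace X]
    [MeasurableSpace X] [BorelSpace X] (μ : Measure X)
    (hμ : ∀ s : Set X, Bornology.IsBounded s → μ s < ⊤)
    (Ω : Set X) (hΩo : IsOpen Ω) (hΩb : Bornology.IsBounded Ω)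
    (lam : ℝ) (hlam : 0 < lam) :
    (∀ A : ℕ → Set X,
        (∀ i, A i ⊆ Ω ∧ IsClosed (A i) ∧ Mfun μ Ω lam (A i) < ⊤) → Antitone A →
        Mfun μ Ω lam (⋂ i, A i) ≤ atTop.liminf fun i => Mfun μ Ω lam (A i)) ∧
    (∀ C : Set X, C ⊆ Ω → IsClosed C → Mfun μ Ω lam C < ⊤ →
        ∃ G : Set X, (G ⊆ Ω ∧ IsClosed G ∧ Mfun μ Ω lam G < ⊤) ∧
          (μ (G \ C) = 0 ∧ Mfun μ Ω lam G ≤ Mfun μ Ω lam C) ∧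
          ∀ A : Set X, A ⊆ Ω → IsClosed A → Mfun μ Ω lam A < ⊤ →
            (μ (A \ G) = 0 ∧ Mfun μ Ω lam A ≤ Mfun μ Ω lam G) →
            (μ (G \ A) = 0 ∧ Mfun μ Ω lam G ≤ Mfun μ Ω lam A)) := by
  have part1 := Mfun_lsc μ hμ Ω hΩb lam
  refine ⟨part1, ?_⟩
  intro C hC1 hC2 hC3
  set Good : Set X → Prop := fun A => A ⊆ Ω ∧ IsClosed A ∧ Mfun μ Ω lam A < ⊤ with hGoodDef
  have hGoodInter : ∀ A B, Good A → Good B → μ (A \ B) = 0 → Good (A ∩ B) := by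
    intro A B hA hB h
    exact ⟨inter_subset_left.trans hA.1, hA.2.1.inter hB.2.1,
      by rw [Mfun_inter μ Ω lam h]; exact hA.2.2⟩
  have hμfin : ∀ A, Good A → μ A ≠ ⊤ := fun A hA => (hμ A (hΩb.subset hA.1)).ne
  have hMcongr : ∀ A B, Good A → Good B → μ (A \ B) = 0 →
      Mfun μ Ω lam (A ∩ B) = Mfun μ Ω lam A := fun A B _ _ h => Mfun_inter μ Ω lam h
  have hμcongr : ∀ A B, Good A → Good B → μ (A \ B) = 0 → μ (A ∩ B) = μ A := by
    intro A B hA hB h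
    conv_rhs => rw [← measure_inter_add_diff A hB.2.1.measurableSet, h, add_zero]
  have hGoodChain : ∀ K : ℕ → Set X, (∀ n, Good (K n)) → Antitone K →
      Mfun μ Ω lam (⋂ n, K n) < ⊤ → Good (⋂ n, K n) := by
    intro K hK hanti hfin
    exact ⟨(iInter_subset K 0).trans (hK 0).1, isClosed_iInter fun n => (hK n).2.1, hfin⟩
  have hMchain : ∀ K : ℕ → Set X, (∀ n, Good (K n)) → Antitone K →
      Mfun μ Ω lam (⋂ n, K n) ≤ atTop.liminf fun n => Mfun μ Ω lam (K n) :=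
    fun K hK hanti => part1 K (fun n => hK n) hanti
  have hμchain : ∀ K : ℕ → Set X, (∀ n, Good (K n)) → Antitone K →
      μ (⋂ n, K n) ≤ atTop.liminf fun n => μ (K n) := by
    intro K hK hanti
    exact le_liminf_of_le (by isBoundedDefault)
      (Eventually.of_forall fun n => measure_mono (iInter_subset K n))
  obtain ⟨G₁, hG₁good, hG₁sub, hG₁M, hG₁min⟩ := stage_abstract μ Good
    (Mfun μ Ω lam) (Mfun μ Ω lam)
    (fun A hA => hA.2.2.ne) (fun A hA => hA.2.2.ne) hGoodInter hMcongr hMcongr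
    hGoodChain hMchain hMchain C ⟨hC1, hC2, hC3⟩
  obtain ⟨G, hGgood, hGsub, hGM, hGmin⟩ := stage_abstract μ Good
    (Mfun μ Ω lam) μ
    (fun A hA => hA.2.2.ne) hμfin hGoodInter hMcongr hμcongr
    hGoodChain hMchain hμchain G₁ hG₁good
  refine ⟨G, hGgood, ⟨?_, hGM.trans hG₁M⟩, ?_⟩
  · rw [diff_eq_empty.mpr (hGsub.trans hG₁sub)]
    exact measure_empty
  · rintro A hA1 hA2 hA3 ⟨hAnull, hAM⟩
    have hAgood : Good A := ⟨hA1, hA2, hA3⟩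
    have hAG₁null : μ (A \ G₁) = 0 := measure_mono_null (diff_subset_diff_right hGsub) hAnull
    have hMG₁A : Mfun μ Ω lam G₁ ≤ Mfun μ Ω lam A := hG₁min A hAgood hAG₁null (hAM.trans hGM)
    have hMGA : Mfun μ Ω lam G ≤ Mfun μ Ω lam A := hGM.trans hMG₁A
    refine ⟨?_, hMGA⟩
    have hμGA : μ G ≤ μ A := hGmin A hAgood hAnull hAM
    have h1 : μ (A ∩ G) = μ A := by
      conv_rhs => rw [← measure_inter_add_diff A hGgood.2.1.measurableSet, hAnull, add_zero]
    have hAle : μ A ≤ μ G := h1 ▸ measure_mono inter_subset_right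
    have hAeq : μ A = μ G := le_antisymm hAle hμGA
    have h2 : μ (G ∩ A) + μ (G \ A) = μ G := measure_inter_add_diff G hA2.measurableSet
    have h3 : μ (G ∩ A) = μ G := by rw [inter_comm, h1, hAeq]
    rw [h3] at h2
    have h4 : μ G + μ (G \ A) = μ G + 0 := by rw [h2, add_zero]
    exact (ENNReal.add_right_inj (hμfin G hGgood)).mp h4
end
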